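/- For every state ρ on ℂ² ⊗ ℂ^n, the minimal trace-norm disturbance under local dephasing of the qubit equals the minimal trace-norm distance from the classical-quantum states: inf over 2×2 unitaries U of ‖ρ − Π_U[ρ]‖₁ = inf over classical-quantum states σ of ‖ρ − σ‖₁, where Π_U[ρ] = Σ_{i∈{0,1}} (U E_{ii} U† ⊗ I) ρ (U E_{ii} U† ⊗ I). -/

import Mathlib

open scoped Kronecker ComplexOrder
open Matrix

noncomputable def traceNorm {ι : Type*} [Fintype ι] [DecidableEq ι] (A : Matrix ι ι ℂ) : ℝ :=
  (((Matrix.posSemidef_conjTranspose_mul_self A).1.eigenvectorUnitary.1 *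
    diagonal (((↑) : ℝ → ℂ) ∘ (√·) ∘ (Matrix.posSemidef_conjTranspose_mul_self A).1.eigenvalues) *
    (star (Matrix.posSemidef_conjTranspose_mul_self A).1.eigenvectorUnitary : Matrix ι ι ℂ)).trace).re

noncomputable def l1Norm {ι κ : Type*} [Fintype ι] [Fintype κ] (A : Matrix ι κ ℂ) : ℝ :=
  ∑ i, ∑ j, ‖A i j‖

def ptranspose {α β : Type*} (ρ : Matrix (α × β) (α × β) ℂ) : Matrix (α × β) (α × β) ℂ :=
  Matrix.of fun p q => ρ (p.1, q.2) (q.1, p.2)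

noncomputable def negativity {α β : Type*} [Fintype α] [Fintype β] [DecidableEq α] [DecidableEq β]
    (ρ : Matrix (α × β) (α × β) ℂ) : ℝ :=
  (traceNorm (ptranspose ρ) - 1) / 2

def matUnit {ι : Type*} [DecidableEq ι] (i j : ι) : Matrix ι ι ℂ :=
  Matrix.single i j 1

noncomputable def mcs {n : ℕ} (t : Fin n → Fin n → ℂ) :
    Matrix (Fin n × Fin n) (Fin n × Fin n) ℂ :=
  ∑ i, ∑ j, t i j • (matUnit i j ⊗ₖ matUnit i j)

def blockOf {m n : ℕ} (ρ : Matrix (Fin m × Fin n) (Fin m × Fin n) ℂ) (i j : Fin m) :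
    Matrix (Fin n) (Fin n) ℂ :=
  Matrix.of fun k l => ρ (i, k) (j, l)

noncomputable def conjU {m n : ℕ} (U : Matrix.unitaryGroup (Fin m) ℂ)
    (ρ : Matrix (Fin m × Fin n) (Fin m × Fin n) ℂ) : Matrix (Fin m × Fin n) (Fin m × Fin n) ℂ :=
  ((U : Matrix (Fin m) (Fin m) ℂ) ⊗ₖ (1 : Matrix (Fin n) (Fin n) ℂ))ᴴ * ρ *
    ((U : Matrix (Fin m) (Fin m) ℂ) ⊗ₖ (1 : Matrix (Fin n) (Fin n) ℂ))

noncomputable def conjUV {m n : ℕ} (U : Matrix.unitaryGroup (Fin m) ℂ)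
    (V : Matrix.unitaryGroup (Fin n) ℂ)
    (ρ : Matrix (Fin m × Fin n) (Fin m × Fin n) ℂ) : Matrix (Fin m × Fin n) (Fin m × Fin n) ℂ :=
  ((U : Matrix (Fin m) (Fin m) ℂ) ⊗ₖ (V : Matrix (Fin n) (Fin n) ℂ))ᴴ * ρ *
    ((U : Matrix (Fin m) (Fin m) ℂ) ⊗ₖ (V : Matrix (Fin n) (Fin n) ℂ))

noncomputable def QNA {m n : ℕ} (ρ : Matrix (Fin m × Fin n) (Fin m × Fin n) ℂ) : ℝ :=
  ⨅ U : Matrix.unitaryGroup (Fin m) ℂ,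
    ((∑ i, ∑ j, traceNorm (blockOf (conjU U ρ) i j)) - 1) / 2

noncomputable def QNAB {m n : ℕ} (ρ : Matrix (Fin m × Fin n) (Fin m × Fin n) ℂ) : ℝ :=
  ⨅ U : Matrix.unitaryGroup (Fin m) ℂ, ⨅ V : Matrix.unitaryGroup (Fin n) ℂ,
    (l1Norm (conjUV U V ρ) - 1) / 2

/-- Local dephasing of the qubit in the basis `{U e_0, U e_1}`:
`Π_U[ρ] = Σ_i (U E_{ii} U† ⊗ I) ρ (U E_{ii} U† ⊗ I)`. -/
noncomputable def dephase {n : ℕ} (U : Matrix.unitaryGroup (Fin 2) ℂ)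
    (ρ : Matrix (Fin 2 × Fin n) (Fin 2 × Fin n) ℂ) :
    Matrix (Fin 2 × Fin n) (Fin 2 × Fin n) ℂ :=
  ∑ i : Fin 2,
    (((U : Matrix (Fin 2) (Fin 2) ℂ) * matUnit i i * (U : Matrix (Fin 2) (Fin 2) ℂ)ᴴ)
        ⊗ₖ (1 : Matrix (Fin n) (Fin n) ℂ)) * ρ *
      (((U : Matrix (Fin 2) (Fin 2) ℂ) * matUnit i i * (U : Matrix (Fin 2) (Fin 2) ℂ)ᴴ)
        ⊗ₖ (1 : Matrix (Fin n) (Fin n) ℂ))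

set_option linter.unusedSectionVars false

variable {ι : Type*} [Fintype ι] [DecidableEq ι]

open scoped MatrixOrder

lemma traceNorm_eq_cfc (A : Matrix ι ι ℂ) : traceNorm A = (CFC.sqrt (Aᴴ * A)).trace.re := by
  rw [CFC.sqrt_eq_cfc, cfc_nnreal_eq_real _ (Aᴴ * A) (Matrix.posSemidef_conjTranspose_mul_self A).nonneg,
    (Matrix.posSemidef_conjTranspose_mul_self A).1.cfc_eq]
  simp only [IsHermitian.cfc, Unitary.conjStarAlgAut_apply, traceNorm]
  congr 5
  funext i
  simp only [Function.comp_apply, Real.coe_sqrt, Real.coe_toNNReal']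
  rw [max_eq_left ((Matrix.posSemidef_conjTranspose_mul_self A).eigenvalues_nonneg i)]
  rfl

lemma psd_trace_re_nonneg {A : Matrix ι ι ℂ} (hA : A.PosSemidef) : 0 ≤ A.trace.re := by
  rw [Matrix.trace]
  simp only [Complex.re_sum]
  refine Finset.sum_nonneg fun i _ => ?_
  have := hA.re_dotProduct_nonneg (Pi.single i 1)
  simpa [dotProduct, Matrix.mulVec, Pi.single_apply, Matrix.diag] using this

lemma traceNorm_eq_of_sq {A S : Matrix ι ι ℂ} (hS : S.PosSemidef)
    (h : S * S = Aᴴ * A) : traceNorm A = S.trace.re := by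
  have : S = CFC.sqrt (Aᴴ * A) :=
    ((CFC.sqrt_eq_iff _ _ (Matrix.posSemidef_conjTranspose_mul_self A).nonneg hS.nonneg).mpr h).symm
  rw [traceNorm_eq_cfc, ← this]

lemma traceNorm_nonneg (A : Matrix ι ι ℂ) : 0 ≤ traceNorm A :=
  by rw [traceNorm_eq_cfc]; exact psd_trace_re_nonneg (Matrix.nonneg_iff_posSemidef.mp (CFC.sqrt_nonneg _))

variable {ι : Type*} [Fintype ι] [DecidableEq ι]

noncomputable def efn {X : Matrix ι ι ℂ} (hX : X.IsHermitian) (f : ℝ → ℝ) : Matrix ι ι ℂ :=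
  (hX.eigenvectorUnitary : Matrix ι ι ℂ) *
    Matrix.diagonal (fun i => (f (hX.eigenvalues i) : ℂ)) *
    star (hX.eigenvectorUnitary : Matrix ι ι ℂ)

variable {X : Matrix ι ι ℂ}

lemma efn_mul (hX : X.IsHermitian) (f g : ℝ → ℝ) : efn hX f * efn hX g = efn hX (fun x => f x * g x) := by
  unfold efn
  have h1 : star (hX.eigenvectorUnitary : Matrix ι ι ℂ) *
      (hX.eigenvectorUnitary : Matrix ι ι ℂ) = 1 := Unitary.coe_star_mul_self _
  simp only [Matrix.mul_assoc]
  rw [← Matrix.mul_assoc (star (hX.eigenvectorUnitary : Matrix ι ι ℂ)), h1, Matrix.one_mul,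
    ← Matrix.mul_assoc (Matrix.diagonal _), Matrix.diagonal_mul_diagonal]
  push_cast
  rfl

lemma efn_posSemidef (hX : X.IsHermitian) (f : ℝ → ℝ) (hf : ∀ x, 0 ≤ f x) : (efn hX f).PosSemidef := by
  unfold efn
  rw [Matrix.star_eq_conjTranspose]
  refine (Matrix.posSemidef_diagonal_iff.mpr ?_).mul_mul_conjTranspose_same _
  intro i
  rw [Complex.zero_le_real]
  exact hf _

lemma efn_trace (hX : X.IsHermitian) (f : ℝ → ℝ) : (efn hX f).trace = ∑ i, (f (hX.eigenvalues i) : ℂ) := by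
  unfold efn
  rw [Matrix.trace_mul_cycle, Unitary.coe_star_mul_self, Matrix.one_mul, Matrix.trace_diagonal]

lemma efn_id (hX : X.IsHermitian) : efn hX (fun x => x) = X := (hX.spectral_theorem).symm

lemma efn_sub (hX : X.IsHermitian) (f g : ℝ → ℝ) : efn hX f - efn hX g = efn hX (fun x => f x - g x) := by
  unfold efn
  rw [← Matrix.sub_mul, ← Matrix.mul_sub, Matrix.diagonal_sub]
  push_cast
  rfl

lemma trace_mul_psd_re_nonneg {P Q : Matrix ι ι ℂ} (hP : P.PosSemidef) (hQ : Q.PosSemidef) :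
    0 ≤ (P * Q).trace.re := by
  obtain ⟨B, rfl⟩ := (show ∃ B : Matrix ι ι ℂ, Q = Bᴴ * B from
    ⟨CFC.sqrt Q, by rw [(Matrix.nonneg_iff_posSemidef.mp (CFC.sqrt_nonneg Q)).1.eq,
      CFC.sqrt_mul_sqrt_self Q hQ.nonneg]⟩)
  have := psd_trace_re_nonneg (hP.mul_mul_conjTranspose_same B)
  rwa [← Matrix.trace_mul_cycle, Matrix.mul_assoc] at this

lemma efn_one (hX : X.IsHermitian) : efn hX (fun _ => 1) = 1 := by
  unfold efn
  have h1 : (Matrix.diagonal (fun _ : ι => ((1 : ℝ) : ℂ))) = 1 := by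
    simp [Matrix.diagonal_one]
  have h2 : (hX.eigenvectorUnitary : Matrix ι ι ℂ) * star (hX.eigenvectorUnitary : Matrix ι ι ℂ)
      = 1 := Matrix.mem_unitaryGroup_iff.mp hX.eigenvectorUnitary.2
  rw [h1, Matrix.mul_one, h2]

lemma efn_mul_self_eq (hX : X.IsHermitian) : X * X = efn hX (fun x => x * x) := by
  have h2 := efn_mul hX (fun x => x) (fun x => x)
  rwa [efn_id] at h2

lemma traceNorm_hermitian (hX : X.IsHermitian) : traceNorm X = ∑ i, |hX.eigenvalues i| := by
  have hmul : efn hX (fun x => |x|) * efn hX (fun x => |x|) = Xᴴ * X := by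
    have habs : (fun x : ℝ => |x| * |x|) = fun x : ℝ => x * x :=
      funext fun x => abs_mul_abs_self x
    rw [efn_mul, habs, hX.eq, efn_mul_self_eq hX]
  rw [traceNorm_eq_of_sq (efn_posSemidef hX (fun x => |x|) (fun x => abs_nonneg x)) hmul,
    efn_trace]
  rw [Complex.re_sum]
  simp

lemma efn_trace_re (hX : X.IsHermitian) (f : ℝ → ℝ) : (efn hX f).trace.re = ∑ i, f (hX.eigenvalues i) := by
  rw [efn_trace, Complex.re_sum]
  simp

lemma traceNorm_le_of_decomp (hX : X.IsHermitian) {P Q : Matrix ι ι ℂ} (hP : P.PosSemidef) (hQ : Q.PosSemidef)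
    (h : X = P - Q) : traceNorm X ≤ P.trace.re + Q.trace.re := by
  classical
  set χp : ℝ → ℝ := fun x => if 0 < x then 1 else 0 with hχp
  set χm : ℝ → ℝ := fun x => if x < 0 then 1 else 0 with hχm
  have hPp : (efn hX χp).PosSemidef := efn_posSemidef hX _ (fun x => by
    simp only [hχp]; split <;> norm_num)
  have hPm : (efn hX χm).PosSemidef := efn_posSemidef hX _ (fun x => by
    simp only [hχm]; split <;> norm_num)
  have h1p' : ((1 : Matrix ι ι ℂ) - efn hX χp).PosSemidef := by
    rw [← efn_one hX, efn_sub hX]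
    exact efn_posSemidef hX _ (fun x => by simp only [hχp]; split <;> norm_num)
  have h1m' : ((1 : Matrix ι ι ℂ) - efn hX χm).PosSemidef := by
    rw [← efn_one hX, efn_sub hX]
    exact efn_posSemidef hX _ (fun x => by simp only [hχm]; split <;> norm_num)
  have eXp : (X * efn hX χp).trace.re = ∑ i, max (hX.eigenvalues i) 0 := by
    have h2 := efn_mul hX (fun x => x) χp
    rw [efn_id] at h2
    rw [h2, efn_trace_re]
    refine Finset.sum_congr rfl fun i _ => ?_
    simp only [hχp]
    rcases lt_or_ge 0 (hX.eigenvalues i) with hc | hc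
    · simp [hc, max_eq_left hc.le]
    · simp [not_lt.mpr hc, max_eq_right hc]
  have eXm : (X * efn hX χm).trace.re = -∑ i, max (-hX.eigenvalues i) 0 := by
    have h2 := efn_mul hX (fun x => x) χm
    rw [efn_id] at h2
    rw [h2, efn_trace_re, ← Finset.sum_neg_distrib]
    refine Finset.sum_congr rfl fun i _ => ?_
    simp only [hχm]
    rcases lt_or_ge (hX.eigenvalues i) 0 with hc | hc
    · simp [hc, max_eq_left (by linarith : (0:ℝ) ≤ -hX.eigenvalues i)]
    · simp [not_lt.mpr hc, max_eq_right (by linarith : -hX.eigenvalues i ≤ 0)]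
  have key : ∀ (R Pr : Matrix ι ι ℂ), R.PosSemidef → Pr.PosSemidef →
      ((1 : Matrix ι ι ℂ) - Pr).PosSemidef → (R * Pr).trace.re ≤ R.trace.re := by
    intro R Pr hR hPr h1Pr
    have h0 := trace_mul_psd_re_nonneg hR h1Pr
    rw [Matrix.mul_sub, Matrix.mul_one, Matrix.trace_sub, Complex.sub_re] at h0
    linarith
  have splitp : (X * efn hX χp).trace.re
      = (P * efn hX χp).trace.re - (Q * efn hX χp).trace.re := by
    have e : X * efn hX χp = P * efn hX χp - Q * efn hX χp := by
      rw [← Matrix.sub_mul, ← h]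
    rw [e, Matrix.trace_sub, Complex.sub_re]
  have splitm : (X * efn hX χm).trace.re
      = (P * efn hX χm).trace.re - (Q * efn hX χm).trace.re := by
    have e : X * efn hX χm = P * efn hX χm - Q * efn hX χm := by
      rw [← Matrix.sub_mul, ← h]
    rw [e, Matrix.trace_sub, Complex.sub_re]
  have hp : ∑ i, max (hX.eigenvalues i) 0 ≤ P.trace.re := by
    have h1 := trace_mul_psd_re_nonneg hQ hPp
    have h2 := key P _ hP hPp h1p'
    rw [← eXp, splitp]
    linarith
  have hm : ∑ i, max (-hX.eigenvalues i) 0 ≤ Q.trace.re := by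
    have h1 := trace_mul_psd_re_nonneg hP hPm
    have h2 := key Q _ hQ hPm h1m'
    have h3 := eXm
    rw [splitm] at h3
    linarith
  have habs : traceNorm X = ∑ i, max (hX.eigenvalues i) 0 + ∑ i, max (-hX.eigenvalues i) 0 := by
    rw [traceNorm_hermitian hX, ← Finset.sum_add_distrib]
    refine Finset.sum_congr rfl fun i _ => ?_
    rcases le_total 0 (hX.eigenvalues i) with hc | hc
    · rw [abs_of_nonneg hc, max_eq_left hc, max_eq_right (by linarith)]; ring
    · rw [abs_of_nonpos hc, max_eq_right hc, max_eq_left (by linarith)]; ring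
  rw [habs]
  linarith

lemma exists_decomp (hX : X.IsHermitian) :
    ∃ P Q : Matrix ι ι ℂ, P.PosSemidef ∧ Q.PosSemidef ∧ X = P - Q ∧
    P.trace.re + Q.trace.re = traceNorm X := by
  refine ⟨efn hX (fun x => max x 0), efn hX (fun x => max (-x) 0),
    efn_posSemidef hX _ (fun x => le_max_right _ _),
    efn_posSemidef hX _ (fun x => le_max_right _ _), ?_, ?_⟩
  · rw [efn_sub hX]
    have h1 : (fun x => max x 0 - max (-x) 0) = (fun x : ℝ => x) := by
      ext x
      rcases le_total 0 x with hc | hc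
      · rw [max_eq_left hc, max_eq_right (by linarith)]; ring
      · rw [max_eq_right hc, max_eq_left (by linarith)]; ring
    rw [h1, efn_id]
  · rw [efn_trace_re, efn_trace_re, traceNorm_hermitian hX, ← Finset.sum_add_distrib]
    refine Finset.sum_congr rfl fun i _ => ?_
    rcases le_total 0 (hX.eigenvalues i) with hc | hc
    · rw [abs_of_nonneg hc, max_eq_left hc, max_eq_right (by linarith)]; ring
    · rw [abs_of_nonpos hc, max_eq_right hc, max_eq_left (by linarith)]; ring

lemma traceNorm_add_le {Y : Matrix ι ι ℂ} (hX : X.IsHermitian) (hY : Y.IsHermitian) :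
    traceNorm (X + Y) ≤ traceNorm X + traceNorm Y := by
  obtain ⟨P1, Q1, hP1, hQ1, hd1, ht1⟩ := exists_decomp hX
  obtain ⟨P2, Q2, hP2, hQ2, hd2, ht2⟩ := exists_decomp hY
  have h := traceNorm_le_of_decomp (hX.add hY) (hP1.add hP2) (hQ1.add hQ2)
    (by rw [hd1, hd2]; abel)
  rw [Matrix.trace_add, Matrix.trace_add, Complex.add_re, Complex.add_re] at h
  linarith

lemma traceNorm_conj_unitary {W : Matrix ι ι ℂ} (hW : W ∈ Matrix.unitaryGroup ι ℂ)
    (A : Matrix ι ι ℂ) : traceNorm (W * A * Wᴴ) = traceNorm A := by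
  have hWs : Wᴴ * W = 1 := by
    have := Matrix.mem_unitaryGroup_iff'.mp hW
    rwa [Matrix.star_eq_conjTranspose] at this
  set S := CFC.sqrt (Aᴴ * A) with hS
  have hSpsd := Matrix.nonneg_iff_posSemidef.mp (CFC.sqrt_nonneg (Aᴴ * A))
  have hSS : S * S = Aᴴ * A := CFC.sqrt_mul_sqrt_self _ (Matrix.posSemidef_conjTranspose_mul_self A).nonneg
  have hct : (W * A * Wᴴ)ᴴ = W * Aᴴ * Wᴴ := by
    rw [Matrix.conjTranspose_mul, Matrix.conjTranspose_mul, Matrix.conjTranspose_conjTranspose,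
      Matrix.mul_assoc]
  have hmul : (W * S * Wᴴ) * (W * S * Wᴴ) = (W * A * Wᴴ)ᴴ * (W * A * Wᴴ) := by
    rw [hct]
    have e1 : (W * S * Wᴴ) * (W * S * Wᴴ) = W * (S * (Wᴴ * W) * S) * Wᴴ := by noncomm_ring
    have e2 : (W * Aᴴ * Wᴴ) * (W * A * Wᴴ) = W * (Aᴴ * (Wᴴ * W) * A) * Wᴴ := by noncomm_ring
    rw [e1, e2, hWs, Matrix.mul_one, Matrix.mul_one, hSS]
  rw [traceNorm_eq_of_sq (hSpsd.mul_mul_conjTranspose_same W) hmul,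
    Matrix.trace_mul_cycle, hWs, Matrix.one_mul]
  rw [traceNorm_eq_cfc]

lemma traceNorm_neg (A : Matrix ι ι ℂ) : traceNorm (-A) = traceNorm A := by
  rw [traceNorm_eq_of_sq (Matrix.nonneg_iff_posSemidef.mp (CFC.sqrt_nonneg (Aᴴ * A)))
    (by rw [CFC.sqrt_mul_sqrt_self _ (Matrix.posSemidef_conjTranspose_mul_self A).nonneg]; simp)]
  rw [traceNorm_eq_cfc]

omit [DecidableEq ι] in
lemma posSemidef_real_smul {A : Matrix ι ι ℂ} (hA : A.PosSemidef) {c : ℝ} (hc : 0 ≤ c) :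
    ((c : ℂ) • A).PosSemidef := by
  constructor
  · unfold Matrix.IsHermitian
    rw [Matrix.conjTranspose_smul, hA.1.eq]
    congr 1
    simp [Complex.conj_ofReal]
  · exact (hA.smul (Complex.zero_le_real.mpr hc)).2

lemma traceNorm_real_smul (A : Matrix ι ι ℂ) {c : ℝ} (hc : 0 ≤ c) :
    traceNorm ((c : ℂ) • A) = c * traceNorm A := by
  set S := CFC.sqrt (Aᴴ * A) with hS
  have hSpsd := Matrix.nonneg_iff_posSemidef.mp (CFC.sqrt_nonneg (Aᴴ * A))
  have hSS : S * S = Aᴴ * A := CFC.sqrt_mul_sqrt_self _ (Matrix.posSemidef_conjTranspose_mul_self A).nonneg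
  have hmul : ((c : ℂ) • S) * ((c : ℂ) • S) = ((c : ℂ) • A)ᴴ * ((c : ℂ) • A) := by
    rw [Matrix.conjTranspose_smul, Matrix.smul_mul, Matrix.mul_smul, hSS, smul_smul,
      Matrix.smul_mul, Matrix.mul_smul, smul_smul]
    congr 2
    simp [Complex.conj_ofReal]
  rw [traceNorm_eq_of_sq (posSemidef_real_smul hSpsd hc) hmul, Matrix.trace_smul, smul_eq_mul,
    Complex.re_ofReal_mul]
  rw [traceNorm_eq_cfc]

section kron
variable {κ : Type*} [Fintype κ] [DecidableEq κ]

lemma kron_conjTranspose (A : Matrix ι ι ℂ) (B : Matrix κ κ ℂ) :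
    (A ⊗ₖ B)ᴴ = Aᴴ ⊗ₖ Bᴴ := by
  ext ⟨a, b⟩ ⟨c, d⟩
  simp [Matrix.conjTranspose_apply, Matrix.kroneckerMap_apply, mul_comm]

lemma sub_kron (A B : Matrix ι ι ℂ) (C : Matrix κ κ ℂ) :
    (A - B) ⊗ₖ C = A ⊗ₖ C - B ⊗ₖ C := by
  ext ⟨a, b⟩ ⟨c, d⟩
  simp [Matrix.kroneckerMap_apply, sub_mul]

end kron

section qu
variable {n : ℕ} (U : Matrix.unitaryGroup (Fin 2) ℂ)

local notation "Uc" => (U : Matrix (Fin 2) (Fin 2) ℂ)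

lemma hU1 : Ucᴴ * Uc = 1 := by
  have := Matrix.mem_unitaryGroup_iff'.mp U.2
  rwa [Matrix.star_eq_conjTranspose] at this

lemma hU2 : Uc * Ucᴴ = 1 := by
  have := Matrix.mem_unitaryGroup_iff.mp U.2
  rwa [Matrix.star_eq_conjTranspose] at this

lemma G_apply (i a b : Fin 2) : (Uc * matUnit i i * Ucᴴ) a b = Uc a i * star (Uc b i) := by
  simp [matUnit, Matrix.mul_apply, Matrix.single, Matrix.conjTranspose_apply,
    Finset.sum_ite_eq, ite_and]

local notation "Zm" => (matUnit (0 : Fin 2) 0 - matUnit 1 1)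

lemma hZZ : Zm * Zm = (1 : Matrix (Fin 2) (Fin 2) ℂ) := by
  ext a b
  fin_cases a <;> fin_cases b <;>
    simp [matUnit, Matrix.mul_apply, Matrix.single, Fin.sum_univ_two, Matrix.one_apply]

lemma hZE (i : Fin 2) : Zm * matUnit i i * Zm = matUnit i i := by
  ext a b
  fin_cases i <;> fin_cases a <;> fin_cases b <;>
    simp [matUnit, Matrix.mul_apply, Matrix.single, Fin.sum_univ_two]

lemma hE01 : matUnit (0 : Fin 2) 0 + matUnit 1 1 = 1 := by
  ext a b
  fin_cases a <;> fin_cases b <;>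
    simp [matUnit, Matrix.single, Matrix.one_apply]

noncomputable def Fm : Matrix (Fin 2 × Fin n) (Fin 2 × Fin n) ℂ :=
  (Uc * Zm * Ucᴴ) ⊗ₖ (1 : Matrix (Fin n) (Fin n) ℂ)

lemma ZU_herm : (Uc * Zm * Ucᴴ)ᴴ = Uc * Zm * Ucᴴ := by
  have hZh : (Zm : Matrix (Fin 2) (Fin 2) ℂ)ᴴ = Zm := by
    ext a b
    fin_cases a <;> fin_cases b <;>
      simp [matUnit, Matrix.single, Matrix.conjTranspose_apply]
  rw [Matrix.conjTranspose_mul, Matrix.conjTranspose_mul, hZh,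
    Matrix.conjTranspose_conjTranspose, Matrix.mul_assoc]

lemma ZU_sq : (Uc * Zm * Ucᴴ) * (Uc * Zm * Ucᴴ) = 1 := by
  have e : (Uc * Zm * Ucᴴ) * (Uc * Zm * Ucᴴ) = Uc * (Zm * (Ucᴴ * Uc) * Zm) * Ucᴴ := by
    noncomm_ring
  rw [e, hU1, Matrix.mul_one, hZZ, Matrix.mul_one, hU2]

lemma Fm_herm : (Fm (n := n) U)ᴴ = Fm U := by
  rw [Fm, kron_conjTranspose, ZU_herm, Matrix.conjTranspose_one]

lemma Fm_sq : Fm (n := n) U * Fm U = 1 := by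
  rw [Fm, ← Matrix.mul_kronecker_mul, ZU_sq, Matrix.one_mul, Matrix.one_kronecker_one]

lemma Fm_unitary : Fm (n := n) U ∈ Matrix.unitaryGroup (Fin 2 × Fin n) ℂ := by
  rw [Matrix.mem_unitaryGroup_iff, Matrix.star_eq_conjTranspose, Fm_herm, Fm_sq]

lemma Fm_eq_sub : Fm (n := n) U = (Uc * matUnit 0 0 * Ucᴴ) ⊗ₖ (1 : Matrix (Fin n) (Fin n) ℂ)
    - (Uc * matUnit 1 1 * Ucᴴ) ⊗ₖ (1 : Matrix (Fin n) (Fin n) ℂ) := by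
  rw [Fm, ← sub_kron]
  congr 1
  rw [Matrix.mul_sub, Matrix.sub_mul]

lemma G_kron_add : (Uc * matUnit 0 0 * Ucᴴ) ⊗ₖ (1 : Matrix (Fin n) (Fin n) ℂ)
    + (Uc * matUnit 1 1 * Ucᴴ) ⊗ₖ (1 : Matrix (Fin n) (Fin n) ℂ) = 1 := by
  rw [← Matrix.add_kronecker, ← Matrix.add_mul, ← Matrix.mul_add, hE01, Matrix.mul_one, hU2,
    Matrix.one_kronecker_one]

lemma dephase_eq (ρ : Matrix (Fin 2 × Fin n) (Fin 2 × Fin n) ℂ) :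
    ρ - dephase U ρ = (1/2 : ℂ) • (ρ - Fm U * ρ * Fm U) := by
  set a := (Uc * matUnit 0 0 * Ucᴴ) ⊗ₖ (1 : Matrix (Fin n) (Fin n) ℂ) with ha
  set b := (Uc * matUnit 1 1 * Ucᴴ) ⊗ₖ (1 : Matrix (Fin n) (Fin n) ℂ) with hb
  have hd : dephase U ρ = a * ρ * a + b * ρ * b := by
    rw [dephase, Fin.sum_univ_two]
  have hab : a + b = 1 := G_kron_add U
  have hb1 : b = 1 - a := by rw [← hab]; abel
  have hF : Fm U = a - b := Fm_eq_sub U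
  have key : (ρ - dephase U ρ) + (ρ - dephase U ρ) = ρ - Fm U * ρ * Fm U := by
    rw [hd, hF, hb1]
    noncomm_ring
  have h2 : (1/2 : ℂ) • ((ρ - dephase U ρ) + (ρ - dephase U ρ)) = ρ - dephase U ρ := by
    rw [← two_smul ℂ, smul_smul]
    norm_num
  rw [← key, h2]

lemma F_sigma_F (σ0 σ1 : Matrix (Fin n) (Fin n) ℂ) :
    Fm U * ((Uc * matUnit 0 0 * Ucᴴ) ⊗ₖ σ0 + (Uc * matUnit 1 1 * Ucᴴ) ⊗ₖ σ1) * Fm U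
      = (Uc * matUnit 0 0 * Ucᴴ) ⊗ₖ σ0 + (Uc * matUnit 1 1 * Ucᴴ) ⊗ₖ σ1 := by
  have key : ∀ (i : Fin 2) (σ : Matrix (Fin n) (Fin n) ℂ),
      Fm U * ((Uc * matUnit i i * Ucᴴ) ⊗ₖ σ) * Fm U = (Uc * matUnit i i * Ucᴴ) ⊗ₖ σ := by
    intro i σ
    rw [Fm, ← Matrix.mul_kronecker_mul, ← Matrix.mul_kronecker_mul, Matrix.one_mul,
      Matrix.mul_one]
    congr 1
    have e : Uc * Zm * Ucᴴ * (Uc * matUnit i i * Ucᴴ) * (Uc * Zm * Ucᴴ)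
        = Uc * (Zm * (Ucᴴ * Uc) * matUnit i i * (Ucᴴ * Uc) * Zm) * Ucᴴ := by noncomm_ring
    rw [e, hU1, Matrix.mul_one]
    have e2 : Zm * 1 * matUnit i i * Zm = Zm * matUnit i i * Zm := by noncomm_ring
    rw [e2, hZE]
  rw [Matrix.mul_add, Matrix.add_mul, key 0, key 1]

noncomputable def tau (ρ : Matrix (Fin 2 × Fin n) (Fin 2 × Fin n) ℂ) (i : Fin 2) :
    Matrix (Fin n) (Fin n) ℂ :=
  Matrix.of fun k l => ∑ c, ∑ d, star (Uc c i) * ρ (c, k) (d, l) * Uc d i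

lemma block_eq (ρ : Matrix (Fin 2 × Fin n) (Fin 2 × Fin n) ℂ) (i : Fin 2) :
    ((Uc * matUnit i i * Ucᴴ) ⊗ₖ (1 : Matrix (Fin n) (Fin n) ℂ)) * ρ *
      ((Uc * matUnit i i * Ucᴴ) ⊗ₖ (1 : Matrix (Fin n) (Fin n) ℂ))
      = (Uc * matUnit i i * Ucᴴ) ⊗ₖ tau U ρ i := by
  have hGa : ∀ a b : Fin 2, (Uc * matUnit i i * Ucᴴ) a b = Uc a i * star (Uc b i) :=
    G_apply U i
  ext ⟨a, k⟩ ⟨b, l⟩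
  rw [show ((Uc * matUnit i i * Ucᴴ) ⊗ₖ tau U ρ i) (a, k) (b, l)
      = (Uc a i * star (Uc b i)) * tau U ρ i k l from by
    rw [Matrix.kroneckerMap_apply, hGa]]
  simp only [Matrix.mul_apply, Matrix.kroneckerMap_apply, Matrix.one_apply,
    Fintype.sum_prod_type, hGa, tau, Matrix.of_apply]
  simp only [mul_ite, mul_zero, mul_one, ite_mul, zero_mul, Finset.sum_ite_eq,
    Finset.sum_ite_eq', Finset.mem_univ, if_true]
  simp only [Finset.sum_mul, Finset.mul_sum]
  rw [Finset.sum_comm]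
  refine Finset.sum_congr rfl fun c _ => ?_
  refine Finset.sum_congr rfl fun d _ => ?_
  ring

lemma tau_posSemidef {ρ : Matrix (Fin 2 × Fin n) (Fin 2 × Fin n) ℂ} (hρ : ρ.PosSemidef)
    (i : Fin 2) : (tau U ρ i).PosSemidef := by
  have key : tau U ρ i =
      (Matrix.of fun (p : Fin 2 × Fin n) (l : Fin n) =>
        Uc p.1 i * ((1 : Matrix (Fin n) (Fin n) ℂ) p.2 l))ᴴ * ρ *
      (Matrix.of fun (p : Fin 2 × Fin n) (l : Fin n) =>
        Uc p.1 i * ((1 : Matrix (Fin n) (Fin n) ℂ) p.2 l)) := by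
    ext k l
    simp only [tau, Matrix.of_apply, Matrix.mul_apply, Matrix.conjTranspose_apply,
      Fintype.sum_prod_type, Matrix.one_apply, apply_ite (star : ℂ → ℂ), star_mul',
      star_one, star_zero, mul_ite, mul_zero, mul_one, ite_mul, zero_mul, Finset.sum_ite_eq,
      Finset.sum_ite_eq', Finset.mem_univ, if_true]
    simp only [Finset.sum_mul]
    rw [Finset.sum_comm]
  rw [key]
  exact hρ.conjTranspose_mul_mul_same _

lemma trace_G (i : Fin 2) : (Uc * matUnit i i * Ucᴴ).trace = 1 := by
  rw [Matrix.trace]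
  have : ∀ a : Fin 2, (Uc * matUnit i i * Ucᴴ).diag a = Uc a i * star (Uc a i) := fun a =>
    G_apply U i a a
  rw [Fin.sum_univ_two, this 0, this 1]
  have h := congrFun (congrFun (hU1 U) i) i
  rw [Matrix.mul_apply] at h
  simp only [Matrix.conjTranspose_apply, Matrix.one_apply_eq] at h
  rw [Fin.sum_univ_two] at h
  rw [← h]
  ring

lemma trace_dephase (ρ : Matrix (Fin 2 × Fin n) (Fin 2 × Fin n) ℂ) :
    (dephase U ρ).trace = ρ.trace := by
  have h := dephase_eq U ρ
  have h2 : dephase U ρ = ρ - (1/2 : ℂ) • (ρ - Fm U * ρ * Fm U) := by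
    rw [← h]; abel
  rw [h2, Matrix.trace_sub, Matrix.trace_smul, Matrix.trace_sub]
  have h3 : (Fm U * ρ * Fm U).trace = ρ.trace := by
    rw [Matrix.trace_mul_cycle, Fm_sq, Matrix.one_mul]
  rw [h3]
  simp

lemma dephase_cq (ρ : Matrix (Fin 2 × Fin n) (Fin 2 × Fin n) ℂ) :
    dephase U ρ = (Uc * matUnit 0 0 * Ucᴴ) ⊗ₖ tau U ρ 0
      + (Uc * matUnit 1 1 * Ucᴴ) ⊗ₖ tau U ρ 1 := by
  rw [dephase, Fin.sum_univ_two, block_eq, block_eq]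

lemma tau_trace_sum {ρ : Matrix (Fin 2 × Fin n) (Fin 2 × Fin n) ℂ} (htr : ρ.trace = 1) :
    (tau U ρ 0).trace + (tau U ρ 1).trace = 1 := by
  have h := trace_dephase U ρ
  rw [dephase_cq U ρ, Matrix.trace_add, Matrix.trace_kronecker, Matrix.trace_kronecker,
    trace_G, trace_G, htr, one_mul, one_mul] at h
  exact h

lemma matUnit_herm (i : Fin 2) : (matUnit i i)ᴴ = matUnit i i := by
  ext a b
  fin_cases i <;> fin_cases a <;> fin_cases b <;>
    simp [matUnit, Matrix.single, Matrix.conjTranspose_apply]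

lemma G_herm (i : Fin 2) : (Uc * matUnit i i * Ucᴴ)ᴴ = Uc * matUnit i i * Ucᴴ := by
  rw [Matrix.conjTranspose_mul, Matrix.conjTranspose_mul, matUnit_herm,
    Matrix.conjTranspose_conjTranspose, Matrix.mul_assoc]

lemma main_le {ρ : Matrix (Fin 2 × Fin n) (Fin 2 × Fin n) ℂ} (hρ : ρ.IsHermitian)
    {σ0 σ1 : Matrix (Fin n) (Fin n) ℂ} (h0 : σ0.IsHermitian) (h1 : σ1.IsHermitian) :
    traceNorm (ρ - dephase U ρ)
      ≤ traceNorm (ρ - ((Uc * matUnit 0 0 * Ucᴴ) ⊗ₖ σ0 + (Uc * matUnit 1 1 * Ucᴴ) ⊗ₖ σ1)) := by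
  set σ := (Uc * matUnit 0 0 * Ucᴴ) ⊗ₖ σ0 + (Uc * matUnit 1 1 * Ucᴴ) ⊗ₖ σ1 with hσ
  set X := ρ - σ with hX
  have hσh : σ.IsHermitian := by
    unfold Matrix.IsHermitian
    rw [hσ, Matrix.conjTranspose_add, kron_conjTranspose, kron_conjTranspose, G_herm, G_herm,
      h0.eq, h1.eq]
  have hXh : X.IsHermitian := hρ.sub hσh
  have hFs : Fm U * σ * Fm U = σ := F_sigma_F U σ0 σ1
  have e : ρ - Fm U * ρ * Fm U = X - Fm U * X * Fm U := by
    rw [hX, Matrix.mul_sub, Matrix.sub_mul, hFs]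
    abel
  have hM : (Fm U * X * Fm U).IsHermitian := by
    unfold Matrix.IsHermitian
    rw [Matrix.conjTranspose_mul, Matrix.conjTranspose_mul, Fm_herm, hXh.eq, Matrix.mul_assoc]
  have hMn : traceNorm (-(Fm U * X * Fm U)) = traceNorm X := by
    rw [traceNorm_neg]
    have e2 : Fm U * X * Fm U = Fm U * X * (Fm U)ᴴ := by rw [Fm_herm]
    rw [e2, traceNorm_conj_unitary (Fm_unitary U) X]
  have hcoe : (1/2 : ℂ) = ((1/2 : ℝ) : ℂ) := by norm_num
  rw [dephase_eq U ρ, e, hcoe, traceNorm_real_smul _ (by norm_num : (0:ℝ) ≤ 1/2),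
    sub_eq_add_neg]
  have htri := traceNorm_add_le hXh hM.neg
  rw [hMn] at htri
  have hnn := traceNorm_nonneg X
  linarith

end qu

/-- for any state on `ℂ² ⊗ ℂ^n`, the minimal trace-norm disturbance under
local dephasing of the qubit equals the minimal trace-norm distance from the set of
classical-quantum states. -/
theorem stmt_8 {n : ℕ} (ρ : Matrix (Fin 2 × Fin n) (Fin 2 × Fin n) ℂ)
    (hpos : ρ.PosSemidef) (htr : ρ.trace = 1) :
    (⨅ U : Matrix.unitaryGroup (Fin 2) ℂ, traceNorm (ρ - dephase U ρ))
      = sInf { r : ℝ | ∃ (U : Matrix.unitaryGroup (Fin 2) ℂ)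
          (σ0 σ1 : Matrix (Fin n) (Fin n) ℂ),
          σ0.PosSemidef ∧ σ1.PosSemidef ∧ σ0.trace + σ1.trace = 1 ∧
          r = traceNorm (ρ -
            (((U : Matrix (Fin 2) (Fin 2) ℂ) * matUnit (0 : Fin 2) 0
                * (U : Matrix (Fin 2) (Fin 2) ℂ)ᴴ) ⊗ₖ σ0
              + ((U : Matrix (Fin 2) (Fin 2) ℂ) * matUnit (1 : Fin 2) 1
                * (U : Matrix (Fin 2) (Fin 2) ℂ)ᴴ) ⊗ₖ σ1)) } := by
  have hmem : ∀ U : Matrix.unitaryGroup (Fin 2) ℂ,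
      traceNorm (ρ - dephase U ρ) ∈ { r : ℝ | ∃ (U : Matrix.unitaryGroup (Fin 2) ℂ)
        (σ0 σ1 : Matrix (Fin n) (Fin n) ℂ),
        σ0.PosSemidef ∧ σ1.PosSemidef ∧ σ0.trace + σ1.trace = 1 ∧
        r = traceNorm (ρ -
          (((U : Matrix (Fin 2) (Fin 2) ℂ) * matUnit (0 : Fin 2) 0
              * (U : Matrix (Fin 2) (Fin 2) ℂ)ᴴ) ⊗ₖ σ0
            + ((U : Matrix (Fin 2) (Fin 2) ℂ) * matUnit (1 : Fin 2) 1
              * (U : Matrix (Fin 2) (Fin 2) ℂ)ᴴ) ⊗ₖ σ1)) } := by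
    intro U
    exact ⟨U, tau U ρ 0, tau U ρ 1, tau_posSemidef U hpos 0, tau_posSemidef U hpos 1,
      tau_trace_sum U htr, by rw [← dephase_cq U ρ]⟩
  have hbdd : BddBelow (Set.range fun U : Matrix.unitaryGroup (Fin 2) ℂ =>
      traceNorm (ρ - dephase U ρ)) := by
    refine ⟨0, ?_⟩
    rintro x ⟨U, rfl⟩
    exact traceNorm_nonneg _
  refine le_antisymm ?_ ?_
  · refine le_csInf ⟨_, hmem 1⟩ ?_
    rintro r ⟨U, σ0, σ1, hσ0, hσ1, -, rfl⟩
    exact le_trans (ciInf_le hbdd U) (main_le U hpos.1 hσ0.1 hσ1.1)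
  · refine le_ciInf fun U => csInf_le ⟨0, ?_⟩ (hmem U)
    rintro r ⟨U', σ0, σ1, hσ0, hσ1, -, rfl⟩
    exact traceNorm_nonneg _
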